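/- arXiv:2604.25807 — 2 statements merged into one kernel-verified Lean document; each statement's English description precedes it below -/
import Mathlib

section
/- Let m ≥ 1 be odd, n = 4m + 2, N = 2m + 1, Φ = 2mπ/N, and for real x define ω^x = e^{iΦx/2}. Define β_j = (−1)^{j+1} j + N/2 for 1 ≤ j ≤ n, and let K_j be the 2×2 complex matrix with zero diagonal, (1,2)-entry ω^{β_j}, and (2,1)-entry ω^{−β_j}. Then for every complex number t, the ordered product P(t) = (I + tK_1)(I + tK_2)⋯(I + tK_n) equals (1 − t²)^N I. Consequently, the coefficient of t^{2k} in the (1,1)-entry of P(t) is (−1)^k C(N, k) for 0 ≤ k ≤ N. -/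
open Complex Matrix Finset

/-- telescoping -/
private lemma tele {M : Type*} [Monoid M] (c : M) (hc : ∀ x : M, x * c = c * x) :
    ∀ (L : ℕ) (f g : ℕ → M), (∀ i, i < L → f i * g i = c) →
      ((List.range L).map f).prod *
        ((List.range L).map (fun i => g (L - 1 - i))).prod = c ^ L := by
  intro L
  induction L with
  | zero => intro f g _; simp
  | succ L ih =>
    intro f g h
    have h1 : ((List.range (L + 1)).map f).prod = ((List.range L).map f).prod * f L := by
      rw [List.range_succ]; simp
    have h2 : (List.range (L + 1)).map (fun i => g (L + 1 - 1 - i)) =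
        g L :: (List.range L).map (fun i => g (L - 1 - i)) := by
      rw [List.range_succ_eq_map, List.map_cons, List.map_map]
      refine congrArg₂ List.cons (by norm_num) ?_
      exact List.map_congr_left (fun i _ => by
        show g (L + 1 - 1 - (i + 1)) = g (L - 1 - i)
        congr 1
        omega)
    rw [h1, h2, List.prod_cons]
    have hfg := h L (Nat.lt_succ_self L)
    have ihh := ih f g (fun i hi => h i (Nat.lt_succ_of_lt hi))
    set P := ((List.range L).map f).prod with hP
    set Q := ((List.range L).map (fun i => g (L - 1 - i))).prod with hQ
    calc P * f L * (g L * Q) = P * (f L * g L * Q) := by rw [mul_assoc, mul_assoc]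
      _ = P * (c * Q) := by rw [hfg]
      _ = P * (Q * c) := by rw [hc Q]
      _ = P * Q * c := by rw [mul_assoc]
      _ = c ^ L * c := by rw [ihh]
      _ = c ^ (L + 1) := (pow_succ c L).symm

private lemma block_scalar (K : ℕ → Matrix (Fin 2) (Fin 2) ℂ) (s L e : ℕ) (hL : L = 2 * e)
    (hsq : ∀ i, i < L → K (s + i + 1) * K (s + i + 1) = 1)
    (hrev : ∀ i, i < L → K (s + (L - 1 - i) + 1) = -K (s + i + 1)) :
    ((List.range L).map
        (fun i => (1 : Matrix (Fin 2) (Fin 2) (Polynomial ℂ)) +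
          (Polynomial.X : Polynomial ℂ) • (K (s + i + 1)).map Polynomial.C)).prod
      = (((1 : Polynomial ℂ) - Polynomial.X ^ 2) ^ e) • (1 : Matrix (Fin 2) (Fin 2) (Polynomial ℂ)) := by
  classical
  set f : ℕ → Matrix (Fin 2) (Fin 2) (Polynomial ℂ) :=
    fun i => 1 + (Polynomial.X : Polynomial ℂ) • (K (s + i + 1)).map Polynomial.C with hf
  set g : ℕ → Matrix (Fin 2) (Fin 2) (Polynomial ℂ) :=
    fun i => 1 - (Polynomial.X : Polynomial ℂ) • (K (s + i + 1)).map Polynomial.C with hg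
  set c : Matrix (Fin 2) (Fin 2) (Polynomial ℂ) :=
    ((1 : Polynomial ℂ) - Polynomial.X ^ 2) • 1 with hcdef
  have hc : ∀ x : Matrix (Fin 2) (Fin 2) (Polynomial ℂ), x * c = c * x := by
    intro x
    rw [hcdef, mul_smul_comm, smul_mul_assoc, mul_one, one_mul]
  have hfg : ∀ i, i < L → f i * g i = c := by
    intro i hi
    have hA : ((K (s + i + 1)).map Polynomial.C) * ((K (s + i + 1)).map Polynomial.C)
        = (1 : Matrix (Fin 2) (Fin 2) (Polynomial ℂ)) := by
      rw [← Matrix.map_mul, hsq i hi, Matrix.map_one _ (map_zero _) (map_one _)]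
    set A := (K (s + i + 1)).map (Polynomial.C (R := ℂ))
    have h1 : ((Polynomial.X : Polynomial ℂ) • A) * ((Polynomial.X : Polynomial ℂ) • A)
        = ((Polynomial.X : Polynomial ℂ) ^ 2) • (1 : Matrix (Fin 2) (Fin 2) (Polynomial ℂ)) := by
      rw [smul_mul_assoc, mul_smul_comm, smul_smul, ← pow_two, hA]
    show (1 + (Polynomial.X : Polynomial ℂ) • A) * (1 - (Polynomial.X : Polynomial ℂ) • A) = c
    rw [mul_sub, mul_one, add_mul, one_mul, h1, hcdef, sub_smul, one_smul]
    abel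
  have hlist : (List.range L).map (fun i => g (L - 1 - i)) = (List.range L).map f := by
    apply List.map_congr_left
    intro i hi
    have hi' : i < L := List.mem_range.mp hi
    show g (L - 1 - i) = f i
    have hneg : ((-K (s + i + 1)).map Polynomial.C)
        = -((K (s + i + 1)).map (Polynomial.C (R := ℂ))) := by
      ext a b
      simp [Matrix.map_apply]
    rw [hg, hf]
    show 1 - (Polynomial.X : Polynomial ℂ) • (K (s + (L - 1 - i) + 1)).map Polynomial.C
        = 1 + (Polynomial.X : Polynomial ℂ) • (K (s + i + 1)).map Polynomial.C
    rw [hrev i hi']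
    ext a b
    simp [Matrix.sub_apply, Matrix.add_apply, Matrix.smul_apply, Matrix.map_apply,
      mul_neg, sub_neg_eq_add, smul_eq_mul]
  have hBB := tele c hc L f g hfg
  rw [hlist] at hBB
  set B := ((List.range L).map f).prod with hBdef
  have hBB2 : B * B = ((1 - Polynomial.X ^ 2) ^ L : Polynomial ℂ) • 1 := by
    rw [hBB, hcdef, smul_pow, one_pow]
  set φ : Matrix (Fin 2) (Fin 2) (Polynomial ℂ) →+* Matrix (Fin 2) (Fin 2) ℂ :=
    (Polynomial.evalRingHom 0).mapMatrix with hφ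
  have hφB : φ B = 1 := by
    rw [hBdef, map_list_prod, List.map_map]
    apply List.prod_eq_one
    intro x hx
    obtain ⟨i, _, rfl⟩ := List.mem_map.mp hx
    show φ (f i) = 1
    ext a b
    simp [hφ, hf, RingHom.mapMatrix_apply, Matrix.map_apply, Matrix.add_apply,
      Matrix.smul_apply, Matrix.one_apply, smul_eq_mul, apply_ite (Polynomial.eval (0:ℂ))]
  have hev : ∀ a b : Fin 2, Polynomial.eval 0 (B a b) = (1 : Matrix (Fin 2) (Fin 2) ℂ) a b := by
    intro a b
    have := congrFun (congrFun (congrArg (fun M => (M : Matrix (Fin 2) (Fin 2) ℂ)) hφB) a) b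
    simpa [hφ, RingHom.mapMatrix_apply, Matrix.map_apply] using this
  have htr : B 0 0 + B 1 1 ≠ 0 := by
    intro h
    have := congrArg (Polynomial.eval 0) h
    rw [Polynomial.eval_add, hev 0 0, hev 1 1] at this
    simp [Matrix.one_apply] at this
  have key : ∀ a b : Fin 2, (B * B) a b
      = ((1 - Polynomial.X ^ 2) ^ L : Polynomial ℂ) * (1 : Matrix (Fin 2) (Fin 2) (Polynomial ℂ)) a b := by
    intro a b
    rw [hBB2]
    simp [Matrix.smul_apply]
  have e01 : B 0 1 * (B 0 0 + B 1 1) = 0 := by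
    have h := key 0 1
    rw [Matrix.mul_apply, Fin.sum_univ_two] at h
    simp [Matrix.one_apply] at h
    linear_combination h
  have e10 : B 1 0 * (B 0 0 + B 1 1) = 0 := by
    have h := key 1 0
    rw [Matrix.mul_apply, Fin.sum_univ_two] at h
    simp [Matrix.one_apply] at h
    linear_combination h
  have hB01 : B 0 1 = 0 := by
    rcases mul_eq_zero.mp e01 with h | h
    · exact h
    · exact absurd h htr
  have hB10 : B 1 0 = 0 := by
    rcases mul_eq_zero.mp e10 with h | h
    · exact h
    · exact absurd h htr
  set y : Polynomial ℂ := (1 - Polynomial.X ^ 2) ^ e with hy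
  have hysq : ((1 - Polynomial.X ^ 2) ^ L : Polynomial ℂ) = y ^ 2 := by
    rw [hy, ← pow_mul, hL, mul_comm]
  have hyev : Polynomial.eval 0 y = 1 := by simp [hy]
  have hdiag : ∀ a : Fin 2, B a a * B a a = y ^ 2 → B a a = y := by
    intro a h
    have hfac : (B a a - y) * (B a a + y) = 0 := by linear_combination h
    rcases mul_eq_zero.mp hfac with h' | h'
    · exact sub_eq_zero.mp h'
    · exfalso
      have := congrArg (Polynomial.eval 0) h'
      rw [Polynomial.eval_add, hev a a, hyev] at this
      simp [Matrix.one_apply] at this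
  have hB00 : B 0 0 = y := by
    apply hdiag
    have h := key 0 0
    rw [Matrix.mul_apply, Fin.sum_univ_two] at h
    simp [Matrix.one_apply, hB01] at h
    rw [hysq] at h
    linear_combination h
  have hB11 : B 1 1 = y := by
    apply hdiag
    have h := key 1 1
    rw [Matrix.mul_apply, Fin.sum_univ_two] at h
    simp [Matrix.one_apply, hB10] at h
    rw [hysq] at h
    linear_combination h
  have hfin : B = y • 1 := by
    ext a b
    fin_cases a <;> fin_cases b <;>
      simp [hB00, hB01, hB10, hB11, Matrix.smul_apply, Matrix.one_apply]
  exact hfin.trans (by rw [hy])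

private lemma exp_shift (m N : ℕ) (hmodd : Odd m) (hN : N = 2 * m + 1) (Φ : ℝ)
    (hΦ : Φ = 2 * m * Real.pi / N) (x y : ℝ) (k : ℤ) (hk : Odd k) (hxy : y = x + k * N) :
    Complex.exp (Complex.I * Φ * y / 2) = -Complex.exp (Complex.I * Φ * x / 2) := by
  have hNC : (N : ℂ) ≠ 0 := Nat.cast_ne_zero.mpr (by omega)
  have key : Complex.exp (Complex.I * Φ * (((k : ℝ) * N : ℝ) : ℂ) / 2) = -1 := by
    have h1 : (Complex.I * (Φ : ℂ) * (((k : ℝ) * N : ℝ) : ℂ) / 2)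
        = ((k * m : ℤ) : ℂ) * (Real.pi * Complex.I) := by
      rw [hΦ]
      push_cast
      field_simp
    rw [h1, Complex.exp_int_mul]
    rw [show ((Real.pi : ℂ) * Complex.I) = (Real.pi : ℂ) * Complex.I from rfl,
      Complex.exp_pi_mul_I]
    exact Odd.neg_one_zpow (hk.mul ((Int.odd_coe_nat m).mpr hmodd))
  have hsplit : Complex.I * (Φ : ℂ) * (y : ℂ) / 2
      = Complex.I * (Φ : ℂ) * (x : ℂ) / 2 + Complex.I * (Φ : ℂ) * (((k : ℝ) * N : ℝ) : ℂ) / 2 := by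
    rw [hxy]
    push_cast
    ring
  rw [hsplit, Complex.exp_add, key, mul_neg_one]

/-- Ordered product `P(t) = (I + tK_1)(I + tK_2)⋯(I + tK_n)`. -/
noncomputable def Pprod (n : ℕ) (K : ℕ → Matrix (Fin 2) (Fin 2) ℂ) (t : ℂ) :
    Matrix (Fin 2) (Fin 2) ℂ :=
  ((List.range n).map (fun j => 1 + t • K (j + 1))).prod

theorem stmt18 (m : ℕ) (hm : 1 ≤ m) (hmodd : Odd m)
    (N : ℕ) (hN : N = 2 * m + 1) (Φ : ℝ) (hΦ : Φ = 2 * m * Real.pi / N)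
    (β : ℕ → ℝ)
    (hβ : ∀ j : ℕ, 1 ≤ j → j ≤ 4 * m + 2 →
      β j = (-1 : ℝ) ^ (j + 1) * j + (N : ℝ) / 2)
    (K : ℕ → Matrix (Fin 2) (Fin 2) ℂ)
    (hK : ∀ j : ℕ, 1 ≤ j → j ≤ 4 * m + 2 →
      K j = !![0, Complex.exp (Complex.I * Φ * β j / 2);
               Complex.exp (-(Complex.I * Φ * β j / 2)), 0]) :
    ∀ t : ℂ,
      Pprod (4 * m + 2) K t = ((1 - t ^ 2) ^ N) • (1 : Matrix (Fin 2) (Fin 2) ℂ) ∧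
      (Pprod (4 * m + 2) K t) 0 0 =
        ∑ k ∈ Finset.range (N + 1),
          (-1 : ℂ) ^ k * (N.choose k : ℂ) * t ^ (2 * k) := by
  intro t
  have hNR : (N : ℝ) = 2 * (m : ℝ) + 1 := by rw [hN]; push_cast; ring
  -- K j squares to 1
  have hKsq : ∀ j, 1 ≤ j → j ≤ 4 * m + 2 → K j * K j = 1 := by
    intro j h1 h2
    rw [hK j h1 h2]
    ext a b
    fin_cases a <;> fin_cases b <;>
      simp [Matrix.mul_apply, Fin.sum_univ_two, Matrix.one_apply, ← Complex.exp_add]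
  -- generic negation transfer
  have hKneg : ∀ j j' : ℕ, 1 ≤ j → j ≤ 4 * m + 2 → 1 ≤ j' → j' ≤ 4 * m + 2 →
      (∃ k : ℤ, Odd k ∧ (β j' : ℝ) = β j + k * N) → K j' = -K j := by
    rintro j j' hj1 hj2 hj'1 hj'2 ⟨k, hk, hkeq⟩
    have h1 := exp_shift m N hmodd hN Φ hΦ (β j) (β j') k hk hkeq
    have h2 : Complex.exp (-(Complex.I * Φ * β j' / 2))
        = -Complex.exp (-(Complex.I * Φ * β j / 2)) := by
      rw [Complex.exp_neg, Complex.exp_neg, h1, inv_neg]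
    rw [hK j' hj'1 hj'2, hK j hj1 hj2]
    ext a b
    fin_cases a <;> fin_cases b <;> simp [Matrix.neg_apply, h1, h2]
  -- reversal in the first block
  have hrev1 : ∀ j, 1 ≤ j → j ≤ 2 * m → K (2 * m + 1 - j) = -K j := by
    intro j hj1 hj2
    apply hKneg j (2 * m + 1 - j) hj1 (by omega) (by omega) (by omega)
    have hcast : ((2 * m + 1 - j : ℕ) : ℝ) = 2 * (m : ℝ) + 1 - (j : ℝ) := by
      rw [Nat.cast_sub (show j ≤ 2 * m + 1 by omega)]
      push_cast
      ring
    rcases Nat.even_or_odd j with he | ho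
    · refine ⟨1, odd_one, ?_⟩
      rw [hβ (2 * m + 1 - j) (by omega) (by omega), hβ j hj1 (by omega)]
      have hs1 : (-1 : ℝ) ^ (j + 1) = -1 := (Even.add_one he).neg_one_pow
      have hodd' : Odd (2 * m + 1 - j) :=
        Nat.Odd.sub_even (by omega) (Nat.odd_iff.mpr (by omega)) he
      have hs2 : (-1 : ℝ) ^ ((2 * m + 1 - j) + 1) = 1 := (Odd.add_one hodd').neg_one_pow
      rw [hs1, hs2, hcast, hNR]
      push_cast
      ring
    · refine ⟨-1, ⟨-1, by ring⟩, ?_⟩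
      rw [hβ (2 * m + 1 - j) (by omega) (by omega), hβ j hj1 (by omega)]
      have hs1 : (-1 : ℝ) ^ (j + 1) = 1 := (Odd.add_one ho).neg_one_pow
      have heven' : Even (2 * m + 1 - j) :=
        Nat.Odd.sub_odd (Nat.odd_iff.mpr (by omega)) ho
      have hs2 : (-1 : ℝ) ^ ((2 * m + 1 - j) + 1) = -1 := (Even.add_one heven').neg_one_pow
      rw [hs1, hs2, hcast, hNR]
      push_cast
      ring
  -- reversal in the second block
  have hrev2 : ∀ j, 2 * m + 1 ≤ j → j ≤ 4 * m + 2 → K (6 * m + 3 - j) = -K j := by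
    intro j hj1 hj2
    apply hKneg j (6 * m + 3 - j) (by omega) (by omega) (by omega) (by omega)
    have hcast : ((6 * m + 3 - j : ℕ) : ℝ) = 6 * (m : ℝ) + 3 - (j : ℝ) := by
      rw [Nat.cast_sub (show j ≤ 6 * m + 3 by omega)]
      push_cast
      ring
    rcases Nat.even_or_odd j with he | ho
    · refine ⟨3, ⟨1, by ring⟩, ?_⟩
      rw [hβ (6 * m + 3 - j) (by omega) (by omega), hβ j (by omega) (by omega)]
      have hs1 : (-1 : ℝ) ^ (j + 1) = -1 := (Even.add_one he).neg_one_pow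
      have hodd' : Odd (6 * m + 3 - j) :=
        Nat.Odd.sub_even (by omega) (Nat.odd_iff.mpr (by omega)) he
      have hs2 : (-1 : ℝ) ^ ((6 * m + 3 - j) + 1) = 1 := (Odd.add_one hodd').neg_one_pow
      rw [hs1, hs2, hcast, hNR]
      push_cast
      ring
    · refine ⟨-3, ⟨-2, by ring⟩, ?_⟩
      rw [hβ (6 * m + 3 - j) (by omega) (by omega), hβ j (by omega) (by omega)]
      have hs1 : (-1 : ℝ) ^ (j + 1) = 1 := (Odd.add_one ho).neg_one_pow
      have heven' : Even (6 * m + 3 - j) :=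
        Nat.Odd.sub_odd (Nat.odd_iff.mpr (by omega)) ho
      have hs2 : (-1 : ℝ) ^ ((6 * m + 3 - j) + 1) = -1 := (Even.add_one heven').neg_one_pow
      rw [hs1, hs2, hcast, hNR]
      push_cast
      ring
  -- the two scalar blocks (over polynomials)
  have hB1 := block_scalar K 0 (2 * m) m (by ring)
    (fun i hi => by
      have e : 0 + i + 1 = i + 1 := by omega
      rw [e]; exact hKsq (i + 1) (by omega) (by omega))
    (fun i hi => by
      have e1 : 0 + (2 * m - 1 - i) + 1 = 2 * m + 1 - (i + 1) := by omega
      have e2 : 0 + i + 1 = i + 1 := by omega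
      rw [e1, e2]; exact hrev1 (i + 1) (by omega) (by omega))
  have hB2 := block_scalar K (2 * m) (2 * m + 2) (m + 1) (by ring)
    (fun i hi => hKsq (2 * m + i + 1) (by omega) (by omega))
    (fun i hi => by
      have e1 : 2 * m + (2 * m + 2 - 1 - i) + 1 = 6 * m + 3 - (2 * m + i + 1) := by omega
      rw [e1]; exact hrev2 (2 * m + i + 1) (by omega) (by omega))
  -- full polynomial product
  have hpoly : ((List.range (4 * m + 2)).map
      (fun j => (1 : Matrix (Fin 2) (Fin 2) (Polynomial ℂ)) +
        (Polynomial.X : Polynomial ℂ) • (K (j + 1)).map Polynomial.C)).prod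
      = (((1 : Polynomial ℂ) - Polynomial.X ^ 2) ^ N) •
          (1 : Matrix (Fin 2) (Fin 2) (Polynomial ℂ)) := by
    rw [show 4 * m + 2 = 2 * m + (2 * m + 2) by ring, List.range_add, List.map_append,
      List.prod_append, List.map_map]
    have hA : ((List.range (2 * m)).map
        (fun j => (1 : Matrix (Fin 2) (Fin 2) (Polynomial ℂ)) +
          (Polynomial.X : Polynomial ℂ) • (K (j + 1)).map Polynomial.C)).prod
        = (((1 : Polynomial ℂ) - Polynomial.X ^ 2) ^ m) •
            (1 : Matrix (Fin 2) (Fin 2) (Polynomial ℂ)) := by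
      rw [← hB1]
      congr 1
      apply List.map_congr_left
      intro i _
      rw [Nat.zero_add]
    have hBfun : ((fun j => (1 : Matrix (Fin 2) (Fin 2) (Polynomial ℂ)) +
          (Polynomial.X : Polynomial ℂ) • (K (j + 1)).map Polynomial.C) ∘ (fun x => 2 * m + x))
        = fun i => (1 : Matrix (Fin 2) (Fin 2) (Polynomial ℂ)) +
          (Polynomial.X : Polynomial ℂ) • (K (2 * m + i + 1)).map Polynomial.C := rfl
    rw [hA, hBfun, hB2, smul_mul_smul_comm, one_mul, ← pow_add,
      show m + (m + 1) = N by omega]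
  -- evaluate at t
  have hmain : Pprod (4 * m + 2) K t = ((1 - t ^ 2) ^ N) • 1 := by
    have h := congrArg ((Polynomial.evalRingHom t).mapMatrix :
      Matrix (Fin 2) (Fin 2) (Polynomial ℂ) →+* Matrix (Fin 2) (Fin 2) ℂ) hpoly
    rw [map_list_prod, List.map_map] at h
    have hL : (List.range (4 * m + 2)).map
        ((⇑((Polynomial.evalRingHom t).mapMatrix :
          Matrix (Fin 2) (Fin 2) (Polynomial ℂ) →+* Matrix (Fin 2) (Fin 2) ℂ)) ∘
          (fun j => (1 : Matrix (Fin 2) (Fin 2) (Polynomial ℂ)) +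
            (Polynomial.X : Polynomial ℂ) • (K (j + 1)).map Polynomial.C))
        = (List.range (4 * m + 2)).map (fun j => 1 + t • K (j + 1)) := by
      apply List.map_congr_left
      intro j _
      show ((Polynomial.evalRingHom t).mapMatrix :
          Matrix (Fin 2) (Fin 2) (Polynomial ℂ) →+* Matrix (Fin 2) (Fin 2) ℂ)
          (1 + (Polynomial.X : Polynomial ℂ) • (K (j + 1)).map Polynomial.C)
          = 1 + t • K (j + 1)
      ext a b
      simp [RingHom.mapMatrix_apply, Matrix.map_apply, Matrix.add_apply,
        Matrix.smul_apply, Matrix.one_apply, smul_eq_mul,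
        mul_comm (K (j + 1) a b) t, apply_ite (Polynomial.eval t)]
    have hR : ((Polynomial.evalRingHom t).mapMatrix :
        Matrix (Fin 2) (Fin 2) (Polynomial ℂ) →+* Matrix (Fin 2) (Fin 2) ℂ)
        ((((1 : Polynomial ℂ) - Polynomial.X ^ 2) ^ N) •
          (1 : Matrix (Fin 2) (Fin 2) (Polynomial ℂ)))
        = ((1 - t ^ 2) ^ N) • (1 : Matrix (Fin 2) (Fin 2) ℂ) := by
      ext a b
      simp [RingHom.mapMatrix_apply, Matrix.map_apply, Matrix.smul_apply,
        Matrix.one_apply, smul_eq_mul, apply_ite (Polynomial.eval t)]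
    rw [hL, hR] at h
    exact h
  refine ⟨hmain, ?_⟩
  rw [hmain]
  have hentry : (((1 - t ^ 2) ^ N) • (1 : Matrix (Fin 2) (Fin 2) ℂ)) 0 0 = (1 - t ^ 2) ^ N := by
    simp [Matrix.smul_apply, Matrix.one_apply]
  rw [hentry, sub_eq_add_neg, add_comm, add_pow]
  apply Finset.sum_congr rfl
  intro k _
  rw [one_pow, mul_one, neg_pow, ← pow_mul]
  ring
end

section
/- Let m ≥ 2 be even, n = 4m + 2, N = 2m + 1, Φ = 2mπ/N, and for real x define ω^x = e^{iΦx/2}. Define β_j = (−1)^{j+1}(j + N/(2m)) for 1 ≤ j ≤ n, and let K_j be the 2×2 complex matrix with zero diagonal, (1,2)-entry ω^{β_j}, and (2,1)-entry ω^{−β_j}. Then for every complex number t, the ordered product P(t) = (I + tK_1)(I + tK_2)⋯(I + tK_n) equals (1 − t²)^N I. Consequently, the coefficient of t^{2k} in the (1,1)-entry of P(t) is (−1)^k C(N, k) for 0 ≤ k ≤ N. -/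
open Complex Matrix Finset

/-- Nested palindromic collapse. -/
lemma collapse (f : ℕ → Matrix (Fin 2) (Fin 2) ℂ) (c : ℂ) :
    ∀ r s : ℕ, (∀ i < r, f (i + s) * f (2 * r - 1 - i + s) = c • 1) →
      ((List.range (2 * r)).map (fun i => f (i + s))).prod
        = c ^ r • (1 : Matrix (Fin 2) (Fin 2) ℂ) := by
  intro r
  induction r with
  | zero => intro s _; simp
  | succ r ih =>
    intro s h
    have hmid : ((List.range (2 * r)).map (fun i => f (i + (s + 1)))).prod = c ^ r • 1 := by
      apply ih
      intro i hi
      have hh := h (i + 1) (by omega)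
      have e1 : i + 1 + s = i + (s + 1) := by omega
      have e2 : 2 * (r + 1) - 1 - (i + 1) + s = 2 * r - 1 - i + (s + 1) := by omega
      rwa [e1, e2] at hh
    have h0 := h 0 (by omega)
    have e3 : 2 * (r + 1) - 1 - 0 + s = 2 * r + 1 + s := by omega
    rw [e3] at h0
    have hr : 2 * (r + 1) = (2 * r + 1) + 1 := by omega
    rw [hr, List.range_succ, List.range_succ_eq_map]
    simp only [List.map_append, List.map_cons, List.prod_append, List.prod_cons,
      List.map_map, List.map_nil, List.prod_nil, mul_one]
    have e4 : ((fun i => f (i + s)) ∘ Nat.succ) = fun i => f (i + (s + 1)) := by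
      funext i
      have e : i + 1 + s = i + (s + 1) := by omega
      show f (i + 1 + s) = f (i + (s + 1))
      rw [e]
    rw [e4, hmid, mul_smul_comm, mul_one, smul_mul_assoc, h0, smul_smul, pow_succ]

theorem stmt19 (m : ℕ) (hm : 2 ≤ m) (hmeven : Even m)
    (N : ℕ) (hN : N = 2 * m + 1) (Φ : ℝ) (hΦ : Φ = 2 * m * Real.pi / N)
    (β : ℕ → ℝ)
    (hβ : ∀ j : ℕ, 1 ≤ j → j ≤ 4 * m + 2 →
      β j = (-1 : ℝ) ^ (j + 1) * ((j : ℝ) + (N : ℝ) / (2 * m)))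
    (K : ℕ → Matrix (Fin 2) (Fin 2) ℂ)
    (hK : ∀ j : ℕ, 1 ≤ j → j ≤ 4 * m + 2 →
      K j = !![0, Complex.exp (Complex.I * Φ * β j / 2);
               Complex.exp (-(Complex.I * Φ * β j / 2)), 0]) :
    ∀ t : ℂ,
      Pprod (4 * m + 2) K t = ((1 - t ^ 2) ^ N) • (1 : Matrix (Fin 2) (Fin 2) ℂ) ∧
      (Pprod (4 * m + 2) K t) 0 0 =
        ∑ k ∈ Finset.range (N + 1),
          (-1 : ℂ) ^ k * (N.choose k : ℂ) * t ^ (2 * k) := by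
  obtain ⟨u, hu⟩ := hmeven
  subst hu
  subst hN
  subst hΦ
  set m := u + u with hm'
  have hNodd : Odd (2 * m + 1) := ⟨m, by omega⟩
  have hu1 : 1 ≤ u := by omega
  have huR : (0 : ℝ) < (u : ℝ) := by exact_mod_cast Nat.pos_of_ne_zero (by omega)
  have dM : ((m : ℝ)) ≠ 0 := by
    have : (m : ℝ) = (u : ℝ) + u := by push_cast [hm']; ring
    rw [this]; positivity
  have dN : ((2 * m + 1 : ℕ) : ℝ) ≠ 0 := Nat.cast_ne_zero.mpr (by omega)
  -- each K j squares to 1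
  have Ksq : ∀ j : ℕ, 1 ≤ j → j ≤ 4 * m + 2 → K j * K j = 1 := by
    intro j hj1 hj2
    rw [hK j hj1 hj2, Matrix.mul_fin_two]
    rw [Matrix.one_fin_two]
    congr 1 <;> simp [← Complex.exp_add]
  -- pairing lemma
  have pairK : ∀ j k c : ℕ, Odd c → 1 ≤ j → j ≤ 4 * m + 2 → 1 ≤ k → k ≤ 4 * m + 2 →
      j + k = c * (2 * m + 1) → K k = - K j := by
    intro j k c hc hj1 hj2 hk1 hk2 hsum
    have hβj := hβ j hj1 hj2
    have hβk := hβ k hk1 hk2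
    have hkR : (k : ℝ) = (c : ℝ) * ((2 * m + 1 : ℕ) : ℝ) - j := by
      have h' : (j : ℝ) + (k : ℝ) = (c : ℝ) * ((2 * m + 1 : ℕ) : ℝ) := by
        exact_mod_cast congrArg (Nat.cast : ℕ → ℝ) hsum
      linarith
    have hjk_odd : Odd (j + k) := by rw [hsum]; exact hc.mul hNodd
    have main : ∃ n : ℤ,
        (2 * m * Real.pi / (2 * m + 1 : ℕ)) * β k / 2
          = (2 * m * Real.pi / (2 * m + 1 : ℕ)) * β j / 2 + (2 * (n : ℝ) + 1) * Real.pi := by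
      rcases Nat.even_or_odd j with hje | hjo
      · have hko : Odd k := by
          have h1 := Nat.even_iff.mp hje
          have h2 := Nat.odd_iff.mp hjk_odd
          exact Nat.odd_iff.mpr (by omega)
        refine ⟨(c : ℤ) * u, ?_⟩
        rw [hβj, hβk, Odd.neg_one_pow hje.add_one, Even.neg_one_pow hko.add_one, hkR]
        have hmu : (m : ℝ) = (u : ℝ) + u := by push_cast [hm']; ring
        push_cast [hmu]
        have d1 : ((u : ℝ) + u) ≠ 0 := by positivity
        have d2 : (2 * ((u : ℝ) + u) + 1) ≠ 0 := by positivity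
        field_simp
        ring
      · have hke : Even k := by
          have h1 := Nat.odd_iff.mp hjo
          have h2 := Nat.odd_iff.mp hjk_odd
          exact Nat.even_iff.mpr (by omega)
        refine ⟨-((c : ℤ) * u) - 1, ?_⟩
        rw [hβj, hβk, Even.neg_one_pow hjo.add_one, Odd.neg_one_pow hke.add_one, hkR]
        have hmu : (m : ℝ) = (u : ℝ) + u := by push_cast [hm']; ring
        push_cast [hmu]
        have d1 : ((u : ℝ) + u) ≠ 0 := by positivity
        have d2 : (2 * ((u : ℝ) + u) + 1) ≠ 0 := by positivity
        field_simp
        ring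
    obtain ⟨n, hre⟩ := main
    have hreC := congrArg (fun x : ℝ => (x : ℂ)) hre
    push_cast at hreC
    have hz : Complex.I * ((2 * m * Real.pi / (2 * m + 1 : ℕ) : ℝ) : ℂ) * ((β k : ℝ) : ℂ) / 2
        = Complex.I * ((2 * m * Real.pi / (2 * m + 1 : ℕ) : ℝ) : ℂ) * ((β j : ℝ) : ℂ) / 2
          + (2 * (n : ℂ) + 1) * (Real.pi : ℂ) * Complex.I := by
      push_cast
      linear_combination Complex.I * hreC
    have hminus1 : Complex.exp ((2 * (n : ℂ) + 1) * (Real.pi : ℂ) * Complex.I) = -1 := by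
      have e : (2 * (n : ℂ) + 1) * (Real.pi : ℂ) * Complex.I
          = (n : ℤ) * (2 * (Real.pi : ℂ) * Complex.I) + (Real.pi : ℂ) * Complex.I := by
        push_cast; ring
      rw [e, Complex.exp_add, Complex.exp_int_mul_two_pi_mul_I, Complex.exp_pi_mul_I, one_mul]
    have he1 : Complex.exp (Complex.I * ((2 * m * Real.pi / (2 * m + 1 : ℕ) : ℝ) : ℂ) * ((β k : ℝ) : ℂ) / 2)
        = - Complex.exp (Complex.I * ((2 * m * Real.pi / (2 * m + 1 : ℕ) : ℝ) : ℂ) * ((β j : ℝ) : ℂ) / 2) := by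
      rw [hz, Complex.exp_add, hminus1]; ring
    have he2 : Complex.exp (-(Complex.I * ((2 * m * Real.pi / (2 * m + 1 : ℕ) : ℝ) : ℂ) * ((β k : ℝ) : ℂ) / 2))
        = - Complex.exp (-(Complex.I * ((2 * m * Real.pi / (2 * m + 1 : ℕ) : ℝ) : ℂ) * ((β j : ℝ) : ℂ) / 2)) := by
      rw [hz, neg_add, Complex.exp_add]
      have e : -((2 * (n : ℂ) + 1) * (Real.pi : ℂ) * Complex.I)
          = (-n - 1 : ℤ) * (2 * (Real.pi : ℂ) * Complex.I) + (Real.pi : ℂ) * Complex.I := by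
        push_cast; ring
      rw [e, Complex.exp_add, Complex.exp_int_mul_two_pi_mul_I, Complex.exp_pi_mul_I, one_mul]
      ring
    rw [hK k hk1 hk2, hK j hj1 hj2, he1, he2]
    ext a b
    fin_cases a <;> fin_cases b <;> simp
  intro t
  -- paired factor product
  have pairM : ∀ j k c : ℕ, Odd c → 1 ≤ j → j ≤ 4 * m + 2 → 1 ≤ k → k ≤ 4 * m + 2 →
      j + k = c * (2 * m + 1) →
      (1 + t • K j) * (1 + t • K k) = (1 - t ^ 2) • 1 := by
    intro j k c hc hj1 hj2 hk1 hk2 hsum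
    rw [pairK j k c hc hj1 hj2 hk1 hk2 hsum]
    have hsq := Ksq j hj1 hj2
    have expand : (1 + t • K j) * (1 + t • (- K j))
        = 1 - (t * t) • (K j * K j) := by
      rw [smul_neg, ← sub_eq_add_neg, mul_sub, mul_one, add_mul, one_mul,
        smul_mul_smul_comm]
      abel
    rw [expand, hsq, ← pow_two, sub_smul, one_smul]
  -- main identity
  have hmain : Pprod (4 * m + 2) K t = ((1 - t ^ 2) ^ (2 * m + 1)) • 1 := by
    unfold Pprod
    have hsplit : 4 * m + 2 = 2 * m + (2 * m + 2) := by omega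
    rw [hsplit, List.range_add, List.map_append, List.prod_append, List.map_map]
    have hA : ((List.range (2 * m)).map (fun i => (fun x => 1 + t • K x) (i + 1))).prod
        = (1 - t ^ 2) ^ m • 1 := by
      refine collapse (fun x => 1 + t • K x) (1 - t ^ 2) m 1 ?_
      intro i hi
      exact pairM (i + 1) (2 * m - 1 - i + 1) 1 (by decide) (by omega) (by omega)
        (by omega) (by omega) (by omega)
    have hfun : ((fun j => 1 + t • K (j + 1)) ∘ (fun x => 2 * m + x))
        = fun i => (fun x => 1 + t • K x) (i + (2 * m + 1)) := by
      funext i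
      simp only [Function.comp_apply]
      have e : 2 * m + i + 1 = i + (2 * m + 1) := by omega
      rw [e]
    have hB : ((List.range (2 * m + 2)).map
          (fun i => (fun x => 1 + t • K x) (i + (2 * m + 1)))).prod
        = (1 - t ^ 2) ^ (m + 1) • 1 := by
      have h22 : 2 * m + 2 = 2 * (m + 1) := by omega
      rw [h22]
      refine collapse (fun x => 1 + t • K x) (1 - t ^ 2) (m + 1) (2 * m + 1) ?_
      intro i hi
      exact pairM (i + (2 * m + 1)) (2 * (m + 1) - 1 - i + (2 * m + 1)) 3 (by decide)
        (by omega) (by omega) (by omega) (by omega) (by omega)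
    have epow : m + (m + 1) = 2 * m + 1 := by omega
    rw [hfun, hA, hB, smul_mul_assoc, mul_smul_comm, one_mul, smul_smul, ← pow_add, epow]
  refine ⟨hmain, ?_⟩
  rw [hmain]
  have h00 : (((1 - t ^ 2) ^ (2 * m + 1)) • (1 : Matrix (Fin 2) (Fin 2) ℂ)) 0 0
      = (1 - t ^ 2) ^ (2 * m + 1) := by
    simp [Matrix.smul_apply, Matrix.one_apply]
  rw [h00]
  have h1 : (1 - t ^ 2 : ℂ) = -t ^ 2 + 1 := by ring
  rw [h1, add_pow]
  refine Finset.sum_congr rfl ?_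
  intro k hk
  rw [one_pow, mul_one, neg_pow, pow_mul]
  ring
end
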